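/- Let n ≥ 1 and u ∈ K_∞ with |u|_∞ < q^{n−1}. Then Li_{𝒦,n}(θ·u) − θ·Li_{𝒦,n}(u) = Li_{𝒦,n−1}(u), where Li_{𝒦,m}(w) := ∑'_{i≥1} w^{q^i}/(θ^{q^i} − θ)^m (a tsum in K_∞; under the hypothesis all three series occurring are summable, since |θu|_∞ < q^n, |u|_∞ < q^n and |u|_∞ < q^{n−1}). -/

import Mathlib

open FunctionField
open scoped Multiplicative

open Filter Topology in
/-- Any valued ring is a nonarchimedean additive group. -/
theorem valued_nonarchimedean (R : Type*) [Ring R] (Γ₀ : Type*)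
    [LinearOrderedCommGroupWithZero Γ₀] [Valued R Γ₀] : NonarchimedeanAddGroup R := by
  constructor
  intro U hU
  obtain ⟨γ, hγ⟩ := (Valued.is_topological_valuation U).mp hU
  have hmem : ((Valued.v.restrict.ltAddSubgroup γ : AddSubgroup R) : Set R) ∈ 𝓝 (0 : R) :=
    (Valued.is_topological_valuation _).mpr ⟨γ, subset_rfl⟩
  exact ⟨⟨Valued.v.restrict.ltAddSubgroup γ, AddSubgroup.isOpen_of_mem_nhds _ hmem⟩, hγ⟩

noncomputable instance (Fq : Type*) [Field Fq] [DecidableEq (RatFunc Fq)] :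
    CompleteSpace (RatFunc.CompletionAtInfty Fq) :=
  @UniformSpace.Completion.completeSpace (RatFunc Fq) (RatFunc.inftyValued Fq).toUniformSpace

/-- The canonical ring homomorphism from `K = 𝔽_q(θ)` into its completion
`K_∞ = 𝔽_q((1/θ))` at the infinite place. -/
noncomputable def ratFuncToFqtInfty (Fq : Type*) [Field Fq] [DecidableEq (RatFunc Fq)] :
    RatFunc Fq →+* RatFunc.CompletionAtInfty Fq :=
  letI := RatFunc.inftyValued Fq
  UniformSpace.Completion.coeRingHom

/-- The value of the `m`-th Kochubei polylogarithm at `w ∈ K_∞`, as the sum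
`∑'_{i ≥ 1} w^{q^i} / (θ^{q^i} - θ)^m` in `K_∞`. -/
noncomputable def kochubeiLiVal (Fq : Type*) [Field Fq] [DecidableEq (RatFunc Fq)]
    (q m : ℕ) (w : RatFunc.CompletionAtInfty Fq) : RatFunc.CompletionAtInfty Fq :=
  ∑' i : ℕ,
    w ^ q ^ (i + 1) /
      (ratFuncToFqtInfty Fq RatFunc.X ^ q ^ (i + 1) - ratFuncToFqtInfty Fq RatFunc.X) ^ m

section Aux

open Filter Topology

variable (Fq : Type*) [Field Fq] [DecidableEq (RatFunc Fq)]

theorem v_ratFuncToFqtInfty_X : Valued.v (ratFuncToFqtInfty Fq RatFunc.X)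
    = (↑(Multiplicative.ofAdd (1 : ℤ)) : WithZero (Multiplicative ℤ)) := by
  letI := RatFunc.inftyValued Fq
  have h : Valued.v (ratFuncToFqtInfty Fq RatFunc.X) = Valued.v (RatFunc.X : RatFunc Fq) :=
    Valued.valuedCompletion_apply (K := RatFunc Fq) RatFunc.X
  rw [h, RatFunc.inftyValued.def, ← RatFunc.inftyValuation_apply, RatFunc.inftyValuation.X,
    WithZero.exp_eq_coe_ofAdd]

theorem v_ratFuncToFqtInfty_X_pow_sub (e : ℕ) (he : 2 ≤ e) :
    Valued.v (ratFuncToFqtInfty Fq RatFunc.X ^ e - ratFuncToFqtInfty Fq RatFunc.X)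
    = (↑(Multiplicative.ofAdd (e : ℤ)) : WithZero (Multiplicative ℤ)) := by
  have hpow : Valued.v (ratFuncToFqtInfty Fq RatFunc.X ^ e)
      = (↑(Multiplicative.ofAdd (e : ℤ)) : WithZero (Multiplicative ℤ)) := by
    rw [map_pow, v_ratFuncToFqtInfty_X, ← WithZero.coe_pow]
    congr 1
    rw [← ofAdd_nsmul]
    simp
  have hne : Valued.v (ratFuncToFqtInfty Fq RatFunc.X ^ e)
      ≠ Valued.v (-(ratFuncToFqtInfty Fq RatFunc.X)) := by
    rw [hpow, Valuation.map_neg, v_ratFuncToFqtInfty_X]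
    simp only [ne_eq, WithZero.coe_inj]
    intro hcon
    have := Multiplicative.ofAdd.injective hcon
    omega
  rw [sub_eq_add_neg, Valuation.map_add_of_distinct_val _ hne, hpow, Valuation.map_neg,
    v_ratFuncToFqtInfty_X]
  rw [max_eq_left (by rw [WithZero.coe_le_coe, Multiplicative.ofAdd_le]; omega)]

theorem ratFuncToFqtInfty_X_pow_sub_ne_zero (e : ℕ) (he : 2 ≤ e) :
    ratFuncToFqtInfty Fq RatFunc.X ^ e - ratFuncToFqtInfty Fq RatFunc.X ≠ 0 := by
  intro hcon
  have := v_ratFuncToFqtInfty_X_pow_sub Fq e he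
  rw [hcon, Valuation.map_zero] at this
  exact WithZero.zero_ne_coe this

theorem kochubei_summable_aux (q m : ℕ) (hq : 2 ≤ q) (w : RatFunc.CompletionAtInfty Fq)
    (hw : Valued.v w < (↑(Multiplicative.ofAdd (m : ℤ)) : WithZero (Multiplicative ℤ))) :
    Summable (fun i : ℕ => w ^ q ^ (i + 1) /
      (ratFuncToFqtInfty Fq RatFunc.X ^ q ^ (i + 1) - ratFuncToFqtInfty Fq RatFunc.X) ^ m) := by
  haveI := valued_nonarchimedean (RatFunc.CompletionAtInfty Fq) (WithZero (Multiplicative ℤ))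
  rcases eq_or_ne w 0 with rfl | hw0
  · have : (fun i : ℕ => (0 : RatFunc.CompletionAtInfty Fq) ^ q ^ (i + 1) /
        (ratFuncToFqtInfty Fq RatFunc.X ^ q ^ (i + 1) - ratFuncToFqtInfty Fq RatFunc.X) ^ m)
        = fun _ => 0 := by
      funext i
      rw [zero_pow (by positivity), zero_div]
    rw [this]
    exact summable_zero
  apply NonarchimedeanAddGroup.summable_of_tendsto_cofinite_zero
  rw [Nat.cofinite_eq_atTop]
  obtain ⟨a, ha⟩ : ∃ a : ℤ, Valued.v w = (↑(Multiplicative.ofAdd a) : WithZero (Multiplicative ℤ)) := by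
    have hv0 : Valued.v w ≠ 0 := (Valuation.ne_zero_iff _).mpr hw0
    obtain ⟨x, hx⟩ := WithZero.ne_zero_iff_exists.mp hv0
    exact ⟨Multiplicative.toAdd x, by rw [← hx]; rfl⟩
  have ham : a ≤ (m : ℤ) - 1 := by
    rw [ha, WithZero.coe_lt_coe, Multiplicative.ofAdd_lt] at hw
    omega
  have hbound : ∀ i : ℕ, Valued.v (w ^ q ^ (i + 1) /
      (ratFuncToFqtInfty Fq RatFunc.X ^ q ^ (i + 1) - ratFuncToFqtInfty Fq RatFunc.X) ^ m)
      ≤ (↑(Multiplicative.ofAdd (-(i + 1) : ℤ)) : WithZero (Multiplicative ℤ)) := by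
    intro i
    have he2 : 2 ≤ q ^ (i + 1) := le_trans hq (Nat.le_self_pow (by omega) q)
    have hei : (i : ℤ) + 2 ≤ (q ^ (i + 1) : ℕ) := by
      have h1 : i + 1 < 2 ^ (i + 1) := Nat.lt_two_pow_self
      have h2 : 2 ^ (i + 1) ≤ q ^ (i + 1) := Nat.pow_le_pow_left hq _
      have h3 : i + 2 ≤ q ^ (i + 1) := by omega
      exact_mod_cast h3
    rw [Valuation.map_div, map_pow, map_pow, ha, v_ratFuncToFqtInfty_X_pow_sub Fq _ he2,
      ← WithZero.coe_pow, ← WithZero.coe_pow, ← WithZero.coe_div, WithZero.coe_le_coe,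
      ← ofAdd_nsmul, ← ofAdd_nsmul, ← ofAdd_sub, Multiplicative.ofAdd_le]
    have hnn : (0 : ℤ) ≤ (q ^ (i + 1) : ℕ) := by positivity
    have := mul_le_mul_of_nonneg_left ham hnn
    simp only [nsmul_eq_mul]
    nlinarith
  rw [(Valued.hasBasis_nhds_zero _ _).tendsto_right_iff]
  rintro γ -
  obtain ⟨g, hg⟩ := WithZero.ne_zero_iff_exists.mp ((γ.isUnit.map
    (MonoidWithZeroHom.ValueGroup₀.embedding (f := MonoidWithZeroHom.ofClass
      (Valued.v : Valuation (RatFunc.CompletionAtInfty Fq) (WithZero (Multiplicative ℤ)))))).ne_zero)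
  filter_upwards [eventually_ge_atTop (-(Multiplicative.toAdd g)).toNat] with i hi
  rw [Valuation.restrict_lt_iff_lt_embedding]
  refine lt_of_le_of_lt (hbound i) ?_
  rw [← hg, WithZero.coe_lt_coe]
  have h1 : (-(Multiplicative.toAdd g)) ≤ ((-(Multiplicative.toAdd g)).toNat : ℤ) :=
    Int.self_le_toNat _
  have h2 : ((-(Multiplicative.toAdd g)).toNat : ℤ) ≤ (i : ℤ) := by exact_mod_cast hi
  calc Multiplicative.ofAdd (-(i + 1) : ℤ)
      < Multiplicative.ofAdd (Multiplicative.toAdd g) := by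
        rw [Multiplicative.ofAdd_lt]; omega
    _ = g := by simp

end Aux

/-- For `n ≥ 1` and `u ∈ K_∞` with `|u|_∞ < q^{n-1}`, the Kochubei
polylogarithm values satisfy the Carlitz difference equation
`Li_{𝒦,n}(θ·u) - θ·Li_{𝒦,n}(u) = Li_{𝒦,n-1}(u)`. -/
theorem kochubeiLiVal_difference_equation (Fq : Type*) [Field Fq] [Fintype Fq]
    [DecidableEq (RatFunc Fq)] (q : ℕ) (hq : Fintype.card Fq = q) (n : ℕ) (hn : 1 ≤ n)
    (u : RatFunc.CompletionAtInfty Fq)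
    (hu : Valued.v u < (↑(Multiplicative.ofAdd ((n - 1 : ℕ) : ℤ)) : WithZero (Multiplicative ℤ))) :
    kochubeiLiVal Fq q n (ratFuncToFqtInfty Fq RatFunc.X * u)
        - ratFuncToFqtInfty Fq RatFunc.X * kochubeiLiVal Fq q n u
      = kochubeiLiVal Fq q (n - 1) u := by
  have hq2 : 2 ≤ q := hq ▸ Fintype.one_lt_card
  set t := ratFuncToFqtInfty Fq RatFunc.X with ht
  have hcast : ((n - 1 : ℕ) : ℤ) = (n : ℤ) - 1 := by omega
  have hun : Valued.v u < (↑(Multiplicative.ofAdd (n : ℤ)) : WithZero (Multiplicative ℤ)) := by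
    refine lt_trans hu ?_
    rw [WithZero.coe_lt_coe, Multiplicative.ofAdd_lt]
    omega
  have htu : Valued.v (t * u) < (↑(Multiplicative.ofAdd (n : ℤ)) : WithZero (Multiplicative ℤ)) := by
    rw [Valuation.map_mul, v_ratFuncToFqtInfty_X]
    rcases eq_or_ne (Valued.v u) 0 with h0 | h0
    · rw [h0, mul_zero]
      exact WithZero.zero_lt_coe _
    · obtain ⟨x, hx⟩ := WithZero.ne_zero_iff_exists.mp h0
      rw [← hx, ← WithZero.coe_mul, WithZero.coe_lt_coe]
      rw [← hx, WithZero.coe_lt_coe] at hu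
      have : Multiplicative.toAdd x < ((n - 1 : ℕ) : ℤ) := Multiplicative.ofAdd_lt.mp ?_
      · rw [← ofAdd_toAdd x, ← ofAdd_add, Multiplicative.ofAdd_lt]
        omega
      · simpa using hu
  have hSa : Summable (fun i : ℕ => (t * u) ^ q ^ (i + 1) / (t ^ q ^ (i + 1) - t) ^ n) :=
    kochubei_summable_aux Fq q n hq2 _ htu
  have hSb : Summable (fun i : ℕ => u ^ q ^ (i + 1) / (t ^ q ^ (i + 1) - t) ^ n) :=
    kochubei_summable_aux Fq q n hq2 _ hun
  have key : ∀ i : ℕ,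
      (t * u) ^ q ^ (i + 1) / (t ^ q ^ (i + 1) - t) ^ n
        - t * (u ^ q ^ (i + 1) / (t ^ q ^ (i + 1) - t) ^ n)
      = u ^ q ^ (i + 1) / (t ^ q ^ (i + 1) - t) ^ (n - 1) := by
    intro i
    have hD : t ^ q ^ (i + 1) - t ≠ 0 :=
      ratFuncToFqtInfty_X_pow_sub_ne_zero Fq _ (le_trans hq2 (Nat.le_self_pow (by omega) q))
    obtain ⟨k, rfl⟩ : ∃ k, n = k + 1 := ⟨n - 1, (Nat.succ_pred_eq_of_pos hn).symm⟩
    rw [Nat.add_sub_cancel, mul_pow]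
    field_simp
    ring
  unfold kochubeiLiVal
  rw [← tsum_mul_left, ← Summable.tsum_sub hSa (hSb.mul_left t)]
  exact tsum_congr key
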